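/- Let P be a module over a Lie superalgebra g with exactly one maximal vector (a weight vector not lying in n⁻·P and annihilated by n⁺), up to scalar. Then P is indecomposable: if P = P₁ ⊕ P₂ with both P_i nonzero g-submodules having all weight spaces finite-dimensional, then each P_i contains a nonzero vector of maximal weight not in n⁻·P_i, yielding two linearly independent maximal vectors of P, a contradiction. -/

import Mathlib

/-- `n⁻·Q`: the span of the vectors obtained by acting with negative root operators
on a submodule `Q`. -/
def nminus {V : Type*} [AddCommGroup V] [Module ℂ V] {ιY : Type*}
    (Yops : ιY → Module.End ℂ V) (Q : Submodule ℂ V) : Submodule ℂ V :=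
  Submodule.span ℂ {v | ∃ j, ∃ x ∈ Q, v = Yops j x}

/-- A maximal vector of the weight module `P` (here `P` is the whole module, `⊤`):
a nonzero weight vector annihilated by all positive root operators and not lying in
`n⁻·P`. -/
def IsMaximalVec {V Λw : Type*} [AddCommGroup V] [Module ℂ V] {ιX ιY : Type*}
    (Wt : Λw → Submodule ℂ V) (Xops : ιX → Module.End ℂ V)
    (Yops : ιY → Module.End ℂ V) (v : V) : Prop :=
  v ≠ 0 ∧ (∃ μ, v ∈ Wt μ) ∧ (∀ i, Xops i v = 0) ∧ v ∉ nminus Yops ⊤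

/-- If `w` lies in the span of the weight spaces indexed by `s` and `μ ∉ s`,
then the `μ`-component of `w` vanishes. -/
private lemma pi_vanish {V Λw : Type*} [AddCommGroup V] [Module ℂ V]
    (Wt : Λw → Submodule ℂ V) (π : Λw → Module.End ℂ V)
    (hπzero : ∀ μ μ', μ ≠ μ' → ∀ v ∈ Wt μ', π μ v = 0)
    (s : Set Λw) {μ : Λw} (hμ : μ ∉ s) {w : V} (hw : w ∈ ⨆ μ' ∈ s, Wt μ') :
    π μ w = 0 := by
  have h : (⨆ μ' ∈ s, Wt μ') ≤ LinearMap.ker (π μ) := by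
    refine iSup₂_le fun μ' hμ' v hv => LinearMap.mem_ker.mpr ?_
    exact hπzero μ μ' (fun h => hμ (h ▸ hμ')) v hv
  exact h hw

/-- Key lemma: a nonzero invariant weight submodule `Q` in a decomposition `Q ⊕ R = V`
contains a maximal vector of the whole module. -/
private lemma exists_maxvec {V Λw ιX ιY : Type*} [AddCommGroup V] [Module ℂ V]
    [LinearOrder Λw]
    (Wt : Λw → Submodule ℂ V)
    (Xops : ιX → Module.End ℂ V) (Yops : ιY → Module.End ℂ V)
    (π : Λw → Module.End ℂ V)
    (hπrange : ∀ μ v, π μ v ∈ Wt μ)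
    (hπid : ∀ μ, ∀ v ∈ Wt μ, π μ v = v)
    (hπzero : ∀ μ μ', μ ≠ μ' → ∀ v ∈ Wt μ', π μ v = 0)
    (hdecomp : ∀ v : V, ∃ T : Finset Λw, v = ∑ μ ∈ T, π μ v)
    (hmax : ∀ T : Set Λw, T.Nonempty → ∃ μ ∈ T, ∀ t ∈ T, t ≤ μ)
    (hXraise : ∀ i μ, ∀ v ∈ Wt μ, Xops i v ∈ ⨆ μ' ∈ Set.Ioi μ, Wt μ')
    (hYlower : ∀ j μ, ∀ v ∈ Wt μ, Yops j v ∈ ⨆ μ' ∈ Set.Iio μ, Wt μ')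
    (Q R : Submodule ℂ V) (hQ : Q ≠ ⊥)
    (hQX : ∀ i, ∀ v ∈ Q, Xops i v ∈ Q)
    (hRY : ∀ j, ∀ v ∈ R, Yops j v ∈ R)
    (hRπ : ∀ μ, ∀ v ∈ R, π μ v ∈ R)
    (hQπ : ∀ μ, ∀ v ∈ Q, π μ v ∈ Q)
    (hinf : Q ⊓ R = ⊥) (hsup : Q ⊔ R = ⊤) :
    ∃ v ∈ Q, IsMaximalVec Wt Xops Yops v := by
  classical
  -- the set of weights occurring in Q
  set S : Set Λw := {μ | ∃ v, v ∈ Q ∧ v ∈ Wt μ ∧ v ≠ 0} with hS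
  -- S is nonempty
  obtain ⟨q, hqQ, hq0⟩ := Submodule.ne_bot_iff Q |>.mp hQ
  obtain ⟨T, hT⟩ := hdecomp q
  have hSne : S.Nonempty := by
    by_contra h
    have : ∀ μ ∈ T, π μ q = 0 := by
      intro μ _
      by_contra hne
      exact h ⟨μ, π μ q, hQπ μ q hqQ, hπrange μ q, hne⟩
    exact hq0 (hT.trans (Finset.sum_eq_zero this))
  obtain ⟨μ₀, hμ₀S, hle⟩ := hmax S hSne
  obtain ⟨v₀, hv₀Q, hv₀W, hv₀0⟩ := hμ₀S
  -- Claim 1: components of Q above μ₀ vanish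
  have hQtop : ∀ μ, μ₀ < μ → ∀ x ∈ Q, π μ x = 0 := by
    intro μ hμ x hx
    by_contra h
    exact absurd (hle μ ⟨π μ x, hQπ μ x hx, hπrange μ x, h⟩) (not_le.mpr hμ)
  -- Claim 2: v₀ is annihilated by all Xops
  have hXkill : ∀ i, Xops i v₀ = 0 := by
    intro i
    obtain ⟨T', hT'⟩ := hdecomp (Xops i v₀)
    rw [hT']
    refine Finset.sum_eq_zero fun μ _ => ?_
    rcases le_or_gt μ μ₀ with h | h
    · exact pi_vanish Wt π hπzero (Set.Ioi μ₀) (by simpa using h.not_gt)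
        (hXraise i μ₀ v₀ hv₀W)
    · exact hQtop μ h _ (hQX i v₀ hv₀Q)
  -- Claim 3: π μ₀ kills n⁻·Q (for any Y-invariant use only the weight structure)
  have hpker : ∀ W : Submodule ℂ V, (∀ μ, ∀ x ∈ W, μ₀ < μ → π μ x = 0) →
      ∀ u ∈ nminus Yops W, π μ₀ u = 0 := by
    intro W hW u hu
    induction hu using Submodule.span_induction with
    | mem v hv =>
      obtain ⟨j, x, hxW, rfl⟩ := hv
      obtain ⟨Tx, hTx⟩ := hdecomp x
      have hx : Yops j x = ∑ μ ∈ Tx, Yops j (π μ x) := by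
        conv_lhs => rw [hTx]
        rw [map_sum]
      rw [hx, map_sum]
      refine Finset.sum_eq_zero fun μ _ => ?_
      rcases le_or_gt μ μ₀ with h | h
      · exact pi_vanish Wt π hπzero (Set.Iio μ) (by simpa using h.not_gt)
          (hYlower j μ _ (hπrange μ x))
      · rw [hW μ x hxW h]
        simp
    | zero => simp
    | add a b _ _ ha hb => simp [map_add, ha, hb]
    | smul c a _ ha => simp [map_smul, ha]
  -- Claim 3': also need the top-weight bound for R components of weight μ₀:
  -- π μ₀ kills n⁻·R, because components of R above weights... we don't have a bound
  -- for R.  Instead: n⁻·⊤ ≤ n⁻·Q ⊔ n⁻·R, and n⁻·R ≤ R... we need more care below.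
  -- Claim 4: v₀ ∉ n⁻·P
  have hnot : v₀ ∉ nminus Yops ⊤ := by
    intro hv
    -- n⁻⊤ ≤ n⁻Q ⊔ n⁻R
    have hsplit : nminus Yops ⊤ ≤ nminus Yops Q ⊔ nminus Yops R := by
      refine Submodule.span_le.mpr ?_
      rintro _ ⟨j, x, -, rfl⟩
      obtain ⟨a, haQ, b, hbR, rfl⟩ := Submodule.mem_sup.mp (hsup ▸ Submodule.mem_top (x := x))
      rw [map_add]
      exact Submodule.add_mem_sup
        (Submodule.subset_span ⟨j, a, haQ, rfl⟩)
        (Submodule.subset_span ⟨j, b, hbR, rfl⟩)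
    obtain ⟨a, ha, b, hb, hab⟩ := Submodule.mem_sup.mp (hsplit hv)
    -- π μ₀ a = 0 by Claim 3
    have ha0 : π μ₀ a = 0 := hpker Q (fun μ x hx hμ => hQtop μ hμ x hx) a ha
    have hbR : b ∈ R := by
      refine Submodule.span_le.mpr ?_ hb
      rintro _ ⟨j, x, hxR, rfl⟩
      exact hRY j x hxR
    have : v₀ = π μ₀ b := by
      have := congrArg (π μ₀) hab
      rw [map_add, ha0, zero_add] at this
      rw [this, hπid μ₀ v₀ hv₀W]
    have hmem : v₀ ∈ Q ⊓ R := ⟨hv₀Q, this ▸ hRπ μ₀ b hbR⟩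
    rw [hinf] at hmem
    exact hv₀0 hmem
  exact ⟨v₀, hv₀Q, hv₀0, ⟨μ₀, hv₀W⟩, hXkill, hnot⟩


/-- Theorem 5, indecomposability.  Let `P` be a weight module over a Lie
superalgebra, with weight spaces `Wt μ` (finite-dimensional, with weight projections
`π μ` and every vector a finite sum of its weight components), weights totally ordered
with every nonempty set of weights having a greatest element (weights bounded above),
positive root operators `Xops` strictly raising and negative root operators `Yops`
strictly lowering weights.  If `P` has a unique maximal vector up to scalar, then `P` is
indecomposable: there is no decomposition `P = P₁ ⊕ P₂` into two nonzero invariant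
weight submodules. -/
theorem stmt19 {V Λw ιX ιY : Type*} [AddCommGroup V] [Module ℂ V] [LinearOrder Λw]
    (Wt : Λw → Submodule ℂ V)
    (Xops : ιX → Module.End ℂ V) (Yops : ιY → Module.End ℂ V)
    (π : Λw → Module.End ℂ V)
    (hπrange : ∀ μ v, π μ v ∈ Wt μ)
    (hπid : ∀ μ, ∀ v ∈ Wt μ, π μ v = v)
    (hπzero : ∀ μ μ', μ ≠ μ' → ∀ v ∈ Wt μ', π μ v = 0)
    (hdecomp : ∀ v : V, ∃ T : Finset Λw, v = ∑ μ ∈ T, π μ v)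
    (hfin : ∀ μ, FiniteDimensional ℂ (Wt μ))
    (hmax : ∀ T : Set Λw, T.Nonempty → ∃ μ ∈ T, ∀ t ∈ T, t ≤ μ)
    (hXraise : ∀ i μ, ∀ v ∈ Wt μ, Xops i v ∈ ⨆ μ' ∈ Set.Ioi μ, Wt μ')
    (hYlower : ∀ j μ, ∀ v ∈ Wt μ, Yops j v ∈ ⨆ μ' ∈ Set.Iio μ, Wt μ')
    (huniq : ∀ v w, IsMaximalVec Wt Xops Yops v → IsMaximalVec Wt Xops Yops w →
      ∃ c : ℂ, w = c • v) :
    ∀ P₁ P₂ : Submodule ℂ V, P₁ ≠ ⊥ → P₂ ≠ ⊥ →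
      (∀ i, ∀ v ∈ P₁, Xops i v ∈ P₁) → (∀ j, ∀ v ∈ P₁, Yops j v ∈ P₁) →
      (∀ i, ∀ v ∈ P₂, Xops i v ∈ P₂) → (∀ j, ∀ v ∈ P₂, Yops j v ∈ P₂) →
      (∀ μ, ∀ v ∈ P₁, π μ v ∈ P₁) → (∀ μ, ∀ v ∈ P₂, π μ v ∈ P₂) →
      ¬(P₁ ⊓ P₂ = ⊥ ∧ P₁ ⊔ P₂ = ⊤) := by
  intro P₁ P₂ h1 h2 hX1 hY1 hX2 hY2 hπ1 hπ2 ⟨hinf, hsup⟩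
  obtain ⟨v₁, hv₁P, hv₁⟩ := exists_maxvec Wt Xops Yops π hπrange hπid hπzero hdecomp
    hmax hXraise hYlower P₁ P₂ h1 hX1 hY2 hπ2 hπ1 hinf hsup
  obtain ⟨v₂, hv₂P, hv₂⟩ := exists_maxvec Wt Xops Yops π hπrange hπid hπzero hdecomp
    hmax hXraise hYlower P₂ P₁ h2 hX2 hY1 hπ1 hπ2 (by rw [inf_comm]; exact hinf)
    (by rw [sup_comm]; exact hsup)
  obtain ⟨c, hc⟩ := huniq v₁ v₂ hv₁ hv₂
  have hmem : v₂ ∈ P₁ ⊓ P₂ := ⟨hc ▸ Submodule.smul_mem P₁ c hv₁P, hv₂P⟩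
  rw [hinf] at hmem
  exact hv₂.1 hmem
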